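/- arXiv:1804.04246 — 2 statements merged into one kernel-verified Lean document; each statement's English description precedes it below -/
import Mathlib

section
/- Let K be an algebraic number field. For any natural number R, Σ_{𝔲 ⊆ O_K, 0 < |𝔲| ≤ R} 1/|𝔲| ≪_K log R, where the sum is over all non-zero integral ideals 𝔲 of O_K of absolute norm at most R. -/
open NumberField Filter Topology

open NumberField.mixedEmbedding Module NumberField.mixedEmbedding.fundamentalCone
open NumberField.InfinitePlace NumberField.Units.dirichletUnitTheorem
open scoped nonZeroDivisors

variable (K : Type) [Field K] [NumberField K]

lemma cone_normAtPlace_bound :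
    ∃ c : ℝ, 1 ≤ c ∧ ∀ x ∈ fundamentalCone K, ∀ w : InfinitePlace K,
      normAtPlace w x ≤ c * Real.exp (Real.log (mixedEmbedding.norm x) / (finrank ℚ K : ℝ)) := by
  classical
  obtain ⟨C₀, hC₀⟩ := isBounded_iff_forall_norm_le.mp
    (ZSpan.fundamentalDomain_isBounded ((Units.basisUnitLattice K).ofZLatticeBasis ℝ _))
  set C' : ℝ := max C₀ 1 with hC'
  have hC'1 : (1:ℝ) ≤ C' := le_max_right _ _
  set C₁ : ℝ := 2 * C' * (Fintype.card (InfinitePlace K) + 1) with hC₁def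
  have hC'C₁ : C' ≤ C₁ := by
    have h := Nat.cast_nonneg (α := ℝ) (Fintype.card (InfinitePlace K))
    have : (1:ℝ) ≤ (Fintype.card (InfinitePlace K) + 1 : ℝ) := by linarith
    nlinarith
  refine ⟨Real.exp C₁, Real.one_le_exp (by positivity), fun x hx w ↦ ?_⟩
  have hN : 0 < mixedEmbedding.norm x := norm_pos_of_mem hx
  have hn : ∀ w : InfinitePlace K, 0 < normAtPlace w x := normAtPlace_pos_of_mem hx
  set d : ℝ := (finrank ℚ K : ℝ) with hd
  set δ : InfinitePlace K → ℝ :=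
    fun w => Real.log (normAtPlace w x) - Real.log (mixedEmbedding.norm x) / d with hδdef
  -- bound for w ≠ w₀
  have hδ : ∀ w : InfinitePlace K, w ≠ w₀ → |δ w| ≤ C' := by
    intro w hw
    have h1 : ‖logMap x‖ ≤ C₀ := hC₀ _ hx.1
    have h2 : |logMap x ⟨w, hw⟩| ≤ C₀ :=
      (norm_le_pi_norm (logMap x) ⟨w, hw⟩).trans h1
    have h3 : logMap x ⟨w, hw⟩ = (mult w : ℝ) * δ w := by
      rw [logMap_apply, hδdef, div_eq_mul_inv]
    have h4 : |δ w| ≤ |(mult w : ℝ) * δ w| := by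
      rw [abs_mul]
      refine le_mul_of_one_le_left (abs_nonneg _) ?_
      rw [abs_of_nonneg (by positivity)]
      exact one_le_mult
    calc |δ w| ≤ |(mult w : ℝ) * δ w| := h4
      _ = |logMap x ⟨w, hw⟩| := by rw [h3]
      _ ≤ C₀ := h2
      _ ≤ C' := le_max_left _ _
  -- sum identity
  have hlogN : Real.log (mixedEmbedding.norm x) =
      ∑ w : InfinitePlace K, (mult w : ℝ) * Real.log (normAtPlace w x) := by
    rw [mixedEmbedding.norm_apply, Real.log_prod
      (fun w _ => pow_ne_zero _ (hn w).ne')]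
    simp_rw [Real.log_pow]
  have hsum : ∑ w : InfinitePlace K, (mult w : ℝ) * δ w = 0 := by
    have hcast : ∑ w : InfinitePlace K, (mult w : ℝ) = d := by
      have hs := NumberField.InfinitePlace.sum_mult_eq (K := K)
      rw [hd, ← hs]; push_cast; ring
    have hdpos : (0:ℝ) < d := by
      have h0 : 0 < finrank ℚ K := Module.finrank_pos
      rw [hd]; exact_mod_cast h0
    simp_rw [hδdef, mul_sub, Finset.sum_sub_distrib, ← Finset.sum_mul, hcast]
    rw [← hlogN]
    field_simp
    ring
  -- bound for w₀
  have hδall : ∀ w : InfinitePlace K, δ w ≤ C₁ := by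
    intro w
    by_cases hw : w = w₀
    · have hsplit : (mult w : ℝ) * δ w =
          - ∑ u ∈ Finset.univ.erase w, (mult u : ℝ) * δ u := by
        have := Finset.sum_erase_add Finset.univ
          (fun u : InfinitePlace K => (mult u : ℝ) * δ u) (Finset.mem_univ w)
        rw [hsum] at this
        beta_reduce at this
        linarith
      have h5 : |δ w| ≤ |(mult w : ℝ) * δ w| := by
        rw [abs_mul]
        refine le_mul_of_one_le_left (abs_nonneg _) ?_
        rw [abs_of_nonneg (by positivity)]
        exact one_le_mult
      have h6 : |(mult w : ℝ) * δ w| ≤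
          ∑ u ∈ Finset.univ.erase w, |(mult u : ℝ) * δ u| := by
        rw [hsplit, abs_neg]
        exact Finset.abs_sum_le_sum_abs _ _
      have h7 : ∀ u ∈ Finset.univ.erase w, |(mult u : ℝ) * δ u| ≤ 2 * C' := by
        intro u hu'
        have hune : u ≠ w₀ := by
          have := Finset.ne_of_mem_erase hu'
          rw [← hw]; exact this
        have hm2 : (mult u : ℝ) ≤ 2 := by
          rw [mult]; split <;> norm_num
        rw [abs_mul, abs_of_nonneg (show (0:ℝ) ≤ (mult u : ℝ) by positivity)]
        calc (mult u : ℝ) * |δ u| ≤ 2 * |δ u| :=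
              mul_le_mul_of_nonneg_right hm2 (abs_nonneg _)
          _ ≤ 2 * C' := by
              have := hδ u hune
              linarith
      have h8 : ∑ u ∈ Finset.univ.erase w, |(mult u : ℝ) * δ u| ≤
          (Finset.univ.erase w).card * (2 * C') := by
        calc _ ≤ ∑ _u ∈ Finset.univ.erase w, 2 * C' := Finset.sum_le_sum h7
          _ = (Finset.univ.erase w).card * (2 * C') := by
              rw [Finset.sum_const, nsmul_eq_mul]
      have hcard : ((Finset.univ.erase w).card : ℝ) ≤ Fintype.card (InfinitePlace K) := by
        exact_mod_cast Finset.card_le_card (Finset.erase_subset _ _) |>.trans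
          (le_of_eq (Finset.card_univ))
      have hfin : |δ w| ≤ 2 * C' * (Fintype.card (InfinitePlace K)) := by
        have h2C : (0:ℝ) ≤ 2 * C' := by linarith
        have hcn : (0:ℝ) ≤ ((Finset.univ.erase w).card : ℝ) := Nat.cast_nonneg _
        calc |δ w| ≤ _ := h5.trans h6
          _ ≤ (Finset.univ.erase w).card * (2 * C') := h8
          _ ≤ 2 * C' * (Fintype.card (InfinitePlace K)) := by nlinarith
      calc δ w ≤ |δ w| := le_abs_self _
        _ ≤ 2 * C' * (Fintype.card (InfinitePlace K)) := hfin
        _ ≤ C₁ := by rw [hC₁def]; nlinarith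
    · calc δ w ≤ |δ w| := le_abs_self _
        _ ≤ C' := hδ w hw
        _ ≤ C₁ := hC'C₁
  -- conclude
  have := hδall w
  have hlogw : Real.log (normAtPlace w x) ≤ C₁ + Real.log (mixedEmbedding.norm x) / d := by
    rw [hδdef] at this; simp only at this; linarith
  calc normAtPlace w x = Real.exp (Real.log (normAtPlace w x)) := (Real.exp_log (hn w)).symm
    _ ≤ Real.exp (C₁ + Real.log (mixedEmbedding.norm x) / d) := Real.exp_le_exp.mpr hlogw
    _ = Real.exp C₁ * Real.exp (Real.log (mixedEmbedding.norm x) / d) := Real.exp_add _ _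

lemma integerSet_card_bound :
    ∃ C : ℝ, 1 ≤ C ∧ ∀ s : ℝ, 1 ≤ s →
      Finite {a : integerSet K // mixedEmbedding.norm (a : mixedSpace K) ≤ s} ∧
      (Nat.card {a : integerSet K // mixedEmbedding.norm (a : mixedSpace K) ≤ s} : ℝ)
        ≤ C * s := by
  classical
  obtain ⟨c3, hc31, hc3⟩ := cone_normAtPlace_bound K
  set b := mixedEmbedding.latticeBasis K with hb
  set D := Fintype.card (Free.ChooseBasisIndex ℤ (𝓞 K)) with hD
  have hDd : D = finrank ℚ K := by
    rw [hD, ← finrank_eq_card_chooseBasisIndex, RingOfIntegers.rank]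
  have hD1 : 1 ≤ D := by
    rw [hDd]; exact Module.finrank_pos
  -- coordinate continuous linear map
  obtain ⟨Cf, hCf1, hCf⟩ : ∃ Cf : ℝ, 1 ≤ Cf ∧
      ∀ y : mixedSpace K, ∀ i, |b.equivFun y i| ≤ Cf * ‖y‖ := by
    set f : mixedSpace K →L[ℝ] (Free.ChooseBasisIndex ℤ (𝓞 K) → ℝ) :=
      LinearMap.toContinuousLinearMap (b.equivFun.toLinearMap) with hf
    refine ⟨max ‖f‖ 1, le_max_right _ _, fun y i ↦ ?_⟩
    have h2 : b.equivFun y i = f y i := rfl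
    have h3 : |f y i| ≤ ‖f y‖ := by
      rw [← Real.norm_eq_abs]; exact norm_le_pi_norm (f y) i
    have h4 : ‖f y‖ ≤ ‖f‖ * ‖y‖ := f.le_opNorm y
    have h5 : ‖f‖ * ‖y‖ ≤ max ‖f‖ 1 * ‖y‖ :=
      mul_le_mul_of_nonneg_right (le_max_left _ _) (norm_nonneg _)
    rw [h2]; linarith
  refine ⟨(5 * Cf * c3) ^ D, one_le_pow₀ (by nlinarith), fun s hs ↦ ?_⟩
  set d : ℝ := (finrank ℚ K : ℝ) with hd
  have hdpos : (0:ℝ) < d := by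
    have h0 : 0 < finrank ℚ K := Module.finrank_pos
    rw [hd]; exact_mod_cast h0
  set L : ℝ := c3 * Real.exp (Real.log s / d) with hL
  have hexp1 : (1:ℝ) ≤ Real.exp (Real.log s / d) := by
    rw [show (1:ℝ) = Real.exp 0 by simp]
    exact Real.exp_le_exp.mpr (div_nonneg (Real.log_nonneg hs) hdpos.le)
  have hL1 : (1:ℝ) ≤ L := by nlinarith
  -- norm bound for elements of the set
  have hnormbound : ∀ a : {a : integerSet K // mixedEmbedding.norm (a : mixedSpace K) ≤ s},
      ‖(a.1 : mixedSpace K)‖ ≤ L := by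
    rintro ⟨⟨x, hx⟩, hxs⟩
    have hcone : x ∈ fundamentalCone K := hx.1
    have hN : 0 < mixedEmbedding.norm x := norm_pos_of_mem hcone
    have hNs : Real.exp (Real.log (mixedEmbedding.norm x) / d) ≤ Real.exp (Real.log s / d) := by
      have hll := Real.log_le_log hN hxs
      exact Real.exp_le_exp.mpr (by gcongr)
    rw [norm_eq_sup'_normAtPlace]
    refine Finset.sup'_le _ _ fun w _ ↦ ?_
    calc normAtPlace w x ≤ c3 * Real.exp (Real.log (mixedEmbedding.norm x) / d) := hc3 x hcone w
      _ ≤ L := by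
          rw [hL]
          exact mul_le_mul_of_nonneg_left hNs (by linarith)
  -- the integer coordinates map
  set M₂ : ℤ := ⌈Cf * L⌉ with hM₂
  have hCfL1 : (1:ℝ) ≤ Cf * L := by nlinarith
  have hM₂1 : (1:ℤ) ≤ M₂ := by
    have h0 : (0:ℝ) < Cf * L := by linarith
    have := Int.ceil_pos.mpr h0
    omega
  have key : ∀ a : {a : integerSet K // mixedEmbedding.norm (a : mixedSpace K) ≤ s},
      ∃ c : Free.ChooseBasisIndex ℤ (𝓞 K) → ℤ,
        (∑ i, c i • b i = (a.1 : mixedSpace K)) ∧ ∀ i, -M₂ ≤ c i ∧ c i ≤ M₂ := by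
    rintro ⟨⟨x, hx⟩, hxs⟩
    have hx2 : x ∈ mixedEmbedding.integerLattice K := hx.2
    have hxspan : x ∈ Submodule.span ℤ (Set.range b) :=
      (mem_span_latticeBasis K).mpr hx2
    obtain ⟨c, hc⟩ := Submodule.mem_span_range_iff_exists_fun ℤ |>.mp hxspan
    refine ⟨c, hc, fun i ↦ ?_⟩
    have hrepr : (fun i ↦ (c i : ℝ)) = b.equivFun x := by
      rw [← hc]
      push_cast [← Int.cast_smul_eq_zsmul ℝ]
      rw [show ∑ i, ((c i : ℝ)) • b i = ∑ i, ((fun j ↦ (c j : ℝ)) i) • b i from rfl]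
      rw [Basis.equivFun_apply, Basis.repr_sum_self]
    have hci : |(c i : ℝ)| ≤ Cf * L := by
      have h1 : |(c i : ℝ)| = |b.equivFun x i| := by rw [← hrepr]
      have h3 := hCf x i
      have hxL : ‖x‖ ≤ L := hnormbound ⟨⟨x, hx⟩, hxs⟩
      have h5 : Cf * ‖x‖ ≤ Cf * L := mul_le_mul_of_nonneg_left hxL (by linarith)
      rw [h1]; linarith
    have h6 : (c i : ℝ) ≤ (M₂ : ℝ) := by
      have := (abs_le.mp hci).2
      exact this.trans (Int.le_ceil _)
    have h7 : -(M₂ : ℝ) ≤ (c i : ℝ) := by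
      have := (abs_le.mp hci).1
      have := Int.le_ceil (Cf * L)
      linarith
    exact ⟨by exact_mod_cast h7, by exact_mod_cast h6⟩
  choose g hg1 hg2 using key
  -- injection into a finite type
  set T := (Free.ChooseBasisIndex ℤ (𝓞 K)) → (Finset.Icc (-M₂) M₂ : Finset ℤ) with hT
  have hinj : Function.Injective
      (fun a : {a : integerSet K // mixedEmbedding.norm (a : mixedSpace K) ≤ s} ↦
        (fun i ↦ (⟨g a i, Finset.mem_Icc.mpr ⟨(hg2 a i).1, (hg2 a i).2⟩⟩ : (Finset.Icc (-M₂) M₂ : Finset ℤ))) ) := by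
    intro a a' h
    have hcc : ∀ i, g a i = g a' i := fun i ↦ congrArg Subtype.val (congrFun h i)
    have : (a.1 : mixedSpace K) = (a'.1 : mixedSpace K) := by
      rw [← hg1 a, ← hg1 a']
      exact Finset.sum_congr rfl fun i _ ↦ by rw [hcc i]
    exact Subtype.ext (Subtype.ext this)
  have hfin : Finite {a : integerSet K // mixedEmbedding.norm (a : mixedSpace K) ≤ s} :=
    Finite.of_injective _ hinj
  refine ⟨hfin, ?_⟩
  have hcard : Nat.card {a : integerSet K // mixedEmbedding.norm (a : mixedSpace K) ≤ s}
      ≤ Nat.card T := Nat.card_le_card_of_injective _ hinj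
  have hcardT : (Nat.card T : ℝ) = ((Finset.Icc (-M₂) M₂).card : ℝ) ^ D := by
    rw [hT, Nat.card_eq_fintype_card, Fintype.card_fun, Fintype.card_coe]
    push_cast; rfl
  have hIcc : ((Finset.Icc (-M₂) M₂).card : ℝ) = 2 * (M₂ : ℝ) + 1 := by
    rw [Int.card_Icc]
    have h2 : M₂ + 1 - -M₂ = 2 * M₂ + 1 := by ring
    rw [h2]
    have h3 : (((2 * M₂ + 1).toNat : ℤ) : ℝ) = ((2 * M₂ + 1 : ℤ) : ℝ) := by
      rw [Int.toNat_of_nonneg (show (0:ℤ) ≤ 2 * M₂ + 1 by linarith)]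
    push_cast at h3 ⊢
    linarith
  have hbase : 2 * (M₂ : ℝ) + 1 ≤ 5 * Cf * L := by
    have := Int.ceil_le_floor_add_one (Cf * L)
    have h1 : (M₂ : ℝ) ≤ Cf * L + 1 := by
      rw [hM₂]
      exact (Int.ceil_lt_add_one (Cf * L)).le
    nlinarith
  calc (Nat.card {a : integerSet K // mixedEmbedding.norm (a : mixedSpace K) ≤ s} : ℝ)
      ≤ (Nat.card T : ℝ) := by exact_mod_cast hcard
    _ = ((Finset.Icc (-M₂) M₂).card : ℝ) ^ D := hcardT
    _ ≤ (5 * Cf * L) ^ D := by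
        rw [hIcc]
        refine pow_le_pow_left₀ (by positivity) hbase D
    _ = (5 * Cf * c3) ^ D * s := by
        rw [hL, show 5 * Cf * (c3 * Real.exp (Real.log s / d)) =
          (5 * Cf * c3) * Real.exp (Real.log s / d) by ring, mul_pow,
          ← Real.exp_nat_mul, hd, ← hDd]
        have hD0 : (D:ℝ) ≠ 0 := by
          have : D ≠ 0 := by omega
          exact_mod_cast this
        rw [mul_div_cancel₀ _ hD0, Real.exp_log (by linarith)]


lemma ideal_count_bound :
    ∃ C : ℝ, 1 ≤ C ∧ ∀ (n : ℕ) (G : Finset (Ideal (𝓞 K))),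
      (∀ I ∈ G, 0 < Ideal.absNorm I ∧ Ideal.absNorm I ≤ n) → (G.card : ℝ) ≤ C * n := by
  classical
  obtain ⟨C4, hC41, hC4⟩ := integerSet_card_bound K
  choose rep hrepspec using fun C : ClassGroup (𝓞 K) => ClassGroup.mk0_surjective C⁻¹
  obtain ⟨M, hM1, hM⟩ : ∃ M : ℕ, 1 ≤ M ∧
      ∀ C : ClassGroup (𝓞 K), Ideal.absNorm (rep C : Ideal (𝓞 K)) ≤ M :=
    ⟨max 1 (Finset.univ.sup fun C : ClassGroup (𝓞 K) =>
        Ideal.absNorm (rep C : Ideal (𝓞 K))), le_max_left _ _,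
      fun C => le_max_of_le_right (Finset.le_sup
        (f := fun C : ClassGroup (𝓞 K) => Ideal.absNorm (rep C : Ideal (𝓞 K)))
        (Finset.mem_univ C))⟩
  set h : ℕ := Nat.card (ClassGroup (𝓞 K)) with hh
  have hh1 : 1 ≤ h := Nat.one_le_iff_ne_zero.mpr (Nat.card_ne_zero.mpr
    ⟨⟨1⟩, inferInstance⟩)
  refine ⟨(h : ℝ) * C4 * M, ?_, fun n G hG => ?_⟩
  · have h1 : (1:ℝ) ≤ (h:ℝ) := by exact_mod_cast hh1
    have h2 : (1:ℝ) ≤ (M:ℝ) := by exact_mod_cast hM1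
    calc (1:ℝ) ≤ (h:ℝ) := h1
      _ ≤ (h:ℝ) * C4 := le_mul_of_one_le_right (by linarith) hC41
      _ ≤ (h:ℝ) * C4 * M := le_mul_of_one_le_right (by nlinarith) h2
  rcases Nat.eq_zero_or_pos n with hn | hn
  · subst hn
    have : G = ∅ := Finset.eq_empty_of_forall_notMem fun I hI => by
      have := hG I hI; omega
    simp [this]
  -- now n ≥ 1
  set s : ℝ := (M : ℝ) * (n : ℝ) with hsdef
  have hs1 : (1:ℝ) ≤ s := by
    have h2 : (1:ℝ) ≤ (M:ℝ) := by exact_mod_cast hM1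
    have h3 : (1:ℝ) ≤ (n:ℝ) := by exact_mod_cast hn
    nlinarith
  obtain ⟨hfinT, hcardT⟩ := hC4 s hs1
  -- the map
  have key : ∀ I : {I : Ideal (𝓞 K) // I ∈ G},
      ∃ (c : ClassGroup (𝓞 K)) (a : integerSet K),
        mixedEmbedding.norm (a : mixedSpace K) ≤ s ∧
        ((integerSetEquiv K a).1 : Ideal (𝓞 K)) = I.1 * (rep c : Ideal (𝓞 K)) ∧
        c = ClassGroup.mk0 ⟨I.1, Ideal.absNorm_pos_iff_mem_nonZeroDivisors.mp (hG I.1 I.2).1⟩ := by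
    rintro ⟨I, hIG⟩
    obtain ⟨hIpos, hIle⟩ := hG I hIG
    have hI0 : I ∈ (Ideal (𝓞 K))⁰ := Ideal.absNorm_pos_iff_mem_nonZeroDivisors.mp hIpos
    set c : ClassGroup (𝓞 K) := ClassGroup.mk0 ⟨I, hI0⟩ with hc
    set P : (Ideal (𝓞 K))⁰ := ⟨I, hI0⟩ * rep c with hP
    have hPprinc : (P : Ideal (𝓞 K)).IsPrincipal := by
      rw [← ClassGroup.mk0_eq_one_iff (SetLike.coe_mem P)]
      show ClassGroup.mk0 P = 1
      rw [hP, MonoidHom.map_mul ClassGroup.mk0, hrepspec c, ← hc, mul_inv_cancel]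
    set a : integerSet K := (integerSetEquiv K).symm ⟨⟨P, hPprinc⟩, 1⟩ with ha
    have h1 : ((integerSetEquiv K a).1 : Ideal (𝓞 K)) = (P : Ideal (𝓞 K)) := by
      rw [ha, Equiv.apply_symm_apply]
    have hnormP : Ideal.absNorm ((integerSetEquiv K a).1 : Ideal (𝓞 K)) = intNorm a := by
      rw [integerSetEquiv_apply_fst, Ideal.absNorm_span_singleton]
      rfl
    have h2 : mixedEmbedding.norm (a : mixedSpace K) ≤ s := by
      rw [← intNorm_coe, ← hnormP, h1]
      have : Ideal.absNorm (P : Ideal (𝓞 K)) =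
          Ideal.absNorm I * Ideal.absNorm (rep c : Ideal (𝓞 K)) := by
        rw [hP]; exact MonoidWithZeroHom.map_mul Ideal.absNorm _ _
      rw [this, hsdef]
      push_cast
      have hrc := hM c
      have : (Ideal.absNorm I : ℝ) ≤ n := by exact_mod_cast hIle
      have h4 : (Ideal.absNorm (rep c : Ideal (𝓞 K)) : ℝ) ≤ (M:ℝ) := by exact_mod_cast hrc
      have h5 : (0:ℝ) ≤ (Ideal.absNorm I : ℝ) := by positivity
      nlinarith [Nat.cast_nonneg (α := ℝ) M]
    exact ⟨c, a, h2, h1, rfl⟩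
  choose φc φa hφ1 hφ2 hφ3 using key
  set T := {a : integerSet K // mixedEmbedding.norm (a : mixedSpace K) ≤ s} with hT
  set Φ : {I : Ideal (𝓞 K) // I ∈ G} → ClassGroup (𝓞 K) × T :=
    fun I => (φc I, ⟨φa I, hφ1 I⟩) with hΦ
  have hinj : Function.Injective Φ := by
    intro I I' heq
    have hc : φc I = φc I' := (Prod.ext_iff.mp heq).1
    have haa : φa I = φa I' := congrArg Subtype.val (Prod.ext_iff.mp heq).2
    have e1 : I.1 * (rep (φc I) : Ideal (𝓞 K)) = I'.1 * (rep (φc I') : Ideal (𝓞 K)) := by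
      rw [← hφ2 I, ← hφ2 I', haa]
    rw [← hc] at e1
    have hrne : (rep (φc I) : Ideal (𝓞 K)) ≠ 0 := nonZeroDivisors.coe_ne_zero _
    exact Subtype.ext (mul_right_cancel₀ hrne e1)
  have hcard : Nat.card {I : Ideal (𝓞 K) // I ∈ G} ≤ Nat.card (ClassGroup (𝓞 K) × T) :=
    Nat.card_le_card_of_injective Φ hinj
  rw [Nat.card_prod] at hcard
  have hGc : G.card = Nat.card {I : Ideal (𝓞 K) // I ∈ G} := (Nat.card_eq_finsetCard G).symm
  have final : (G.card : ℝ) ≤ (h:ℝ) * (C4 * s) := by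
    rw [hGc]
    calc (Nat.card {I : Ideal (𝓞 K) // I ∈ G} : ℝ)
        ≤ (Nat.card (ClassGroup (𝓞 K)) : ℝ) * (Nat.card T : ℝ) := by exact_mod_cast hcard
      _ ≤ (h:ℝ) * (C4 * s) := by
          refine mul_le_mul_of_nonneg_left hcardT (by positivity)
  rw [hsdef] at final
  calc (G.card : ℝ) ≤ (h:ℝ) * (C4 * ((M:ℝ) * n)) := final
    _ = (h:ℝ) * C4 * M * n := by ring

-- telescope helper
lemma tele_sum (f : ℕ → ℝ) (a : ℕ) : ∀ b, a ≤ b →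
    ∑ m ∈ Finset.Ico a b, (f (m + 1) - f m) = f b - f a := by
  intro b
  induction b with
  | zero => intro hb; have : a = 0 := Nat.le_zero.mp hb; subst this; simp
  | succ b ih =>
    intro hb
    rcases Nat.lt_or_ge a (b + 1) with h | h
    · have hab : a ≤ b := by omega
      rw [Finset.sum_Ico_succ_top hab, ih hab]; ring
    · have : a = b + 1 := by omega
      rw [this]; simp


/-- **Ideal-counting version of Mertens' first estimate**: the sum of `1/|𝔲|` over non-zero
integral ideals of norm at most `R` is `≪_K log R`. -/
theorem sum_inv_norm_ideals_le
    (K : Type) [Field K] [NumberField K] :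
    ∃ c > 0, ∀ R : ℕ, 2 ≤ R →
      (∑ᶠ 𝔲 ∈ {𝔲 : Ideal (𝓞 K) | 0 < Ideal.absNorm 𝔲 ∧ Ideal.absNorm 𝔲 ≤ R},
        (1 : ℝ) / (Ideal.absNorm 𝔲 : ℝ)) ≤ c * Real.log R := by
  classical
  obtain ⟨C₂, hC21, hC2⟩ := ideal_count_bound K
  refine ⟨3 * C₂, by linarith, fun R hR => ?_⟩
  have hlogR : Real.log 2 ≤ Real.log R := by
    refine Real.log_le_log (by norm_num) ?_
    exact_mod_cast hR
  have hlog2 : (0.6931471803 : ℝ) < Real.log 2 := Real.log_two_gt_d9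
  have hfin : {𝔲 : Ideal (𝓞 K) | 0 < Ideal.absNorm 𝔲 ∧ Ideal.absNorm 𝔲 ≤ R}.Finite :=
    (Ideal.finite_setOf_absNorm_le R).subset fun I hI => hI.2
  have hset : {𝔲 : Ideal (𝓞 K) | 0 < Ideal.absNorm 𝔲 ∧ Ideal.absNorm 𝔲 ≤ R}
      = ↑hfin.toFinset := hfin.coe_toFinset.symm
  rw [hset, finsum_mem_coe_finset]
  set F := hfin.toFinset with hF
  have hmem : ∀ I ∈ F, 0 < Ideal.absNorm I ∧ Ideal.absNorm I ≤ R := by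
    intro I hI
    exact hfin.mem_toFinset.mp hI
  -- decompose 1/n
  have hstep : ∀ I ∈ F, (1 : ℝ) / (Ideal.absNorm I : ℝ) =
      1 / (R : ℝ) + ∑ m ∈ Finset.Ico (Ideal.absNorm I) R,
        ((1:ℝ) / (m:ℝ) - 1 / ((m:ℝ) + 1)) := by
    intro I hI
    obtain ⟨h1, h2⟩ := hmem I hI
    set f : ℕ → ℝ := fun m => (1:ℝ) / (m:ℝ) with hfdef
    have ht := tele_sum f (Ideal.absNorm I) R h2
    have hcongr : ∑ m ∈ Finset.Ico (Ideal.absNorm I) R,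
        ((1:ℝ) / (m:ℝ) - 1 / ((m:ℝ) + 1)) =
        - ∑ m ∈ Finset.Ico (Ideal.absNorm I) R, (f (m + 1) - f m) := by
      rw [← Finset.sum_neg_distrib]
      refine Finset.sum_congr rfl fun m _ => ?_
      rw [hfdef]
      push_cast; ring
    rw [hcongr, ht, hfdef]
    ring
  rw [Finset.sum_congr rfl hstep, Finset.sum_add_distrib, Finset.sum_const, nsmul_eq_mul]
  -- first part
  have hRpos : (0:ℝ) < (R:ℝ) := by exact_mod_cast (show 0 < R by omega)
  have hcard_le : (F.card : ℝ) ≤ C₂ * R := hC2 R F hmem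
  have hpart1 : (F.card : ℝ) * (1 / (R:ℝ)) ≤ C₂ := by
    rw [mul_one_div, div_le_iff₀ hRpos]
    exact hcard_le
  -- swap the double sum
  have hswap : ∑ I ∈ F, ∑ m ∈ Finset.Ico (Ideal.absNorm I) R,
        ((1:ℝ) / (m:ℝ) - 1 / ((m:ℝ) + 1))
      = ∑ m ∈ Finset.Ico 1 R, ((F.filter fun I => Ideal.absNorm I ≤ m).card : ℝ) *
          ((1:ℝ) / (m:ℝ) - 1 / ((m:ℝ) + 1)) := by
    have h1 : ∀ I ∈ F, ∑ m ∈ Finset.Ico (Ideal.absNorm I) R,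
        ((1:ℝ) / (m:ℝ) - 1 / ((m:ℝ) + 1)) =
        ∑ m ∈ Finset.Ico 1 R,
          if Ideal.absNorm I ≤ m then ((1:ℝ) / (m:ℝ) - 1 / ((m:ℝ) + 1)) else 0 := by
      intro I hI
      have he : Finset.Ico (Ideal.absNorm I) R =
          (Finset.Ico 1 R).filter (fun m => Ideal.absNorm I ≤ m) := by
        ext m
        simp only [Finset.mem_Ico, Finset.mem_filter]
        have := (hmem I hI).1
        omega
      rw [he, Finset.sum_filter]
    rw [Finset.sum_congr rfl h1, Finset.sum_comm]
    refine Finset.sum_congr rfl fun m hm => ?_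
    rw [← Finset.sum_filter, Finset.sum_const, nsmul_eq_mul]
  rw [hswap]
  -- bound each term of the outer sum
  have hbound : ∀ m ∈ Finset.Ico 1 R,
      ((F.filter fun I => Ideal.absNorm I ≤ m).card : ℝ) *
        ((1:ℝ) / (m:ℝ) - 1 / ((m:ℝ) + 1)) ≤ C₂ * (1 / ((m:ℝ) + 1)) := by
    intro m hm
    obtain ⟨hm1, hm2⟩ := Finset.mem_Ico.mp hm
    have hm0 : (0:ℝ) < (m:ℝ) := by exact_mod_cast hm1
    have hgm : (0:ℝ) ≤ (1:ℝ) / (m:ℝ) - 1 / ((m:ℝ) + 1) := by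
      rw [sub_nonneg]
      exact one_div_le_one_div_of_le hm0 (by linarith)
    have hcardf : ((F.filter fun I => Ideal.absNorm I ≤ m).card : ℝ) ≤ C₂ * m := by
      refine hC2 m _ fun I hI => ?_
      rw [Finset.mem_filter] at hI
      exact ⟨(hmem I hI.1).1, hI.2⟩
    calc ((F.filter fun I => Ideal.absNorm I ≤ m).card : ℝ) *
          ((1:ℝ) / (m:ℝ) - 1 / ((m:ℝ) + 1))
        ≤ (C₂ * m) * ((1:ℝ) / (m:ℝ) - 1 / ((m:ℝ) + 1)) :=
          mul_le_mul_of_nonneg_right hcardf hgm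
      _ = C₂ * ((m:ℝ) * ((1:ℝ) / (m:ℝ) - 1 / ((m:ℝ) + 1))) := by ring
      _ = C₂ * (1 / ((m:ℝ) + 1)) := by
          congr 1
          have hne : (m:ℝ) ≠ 0 := hm0.ne'
          have hne1 : (m:ℝ) + 1 ≠ 0 := by linarith
          field_simp
          ring
  -- harmonic-log bound
  have hharm : ∑ m ∈ Finset.Ico 1 R, (1:ℝ) / ((m:ℝ) + 1) ≤ Real.log R := by
    have h1 : ∀ m ∈ Finset.Ico 1 R, (1:ℝ) / ((m:ℝ) + 1) ≤
        (fun m : ℕ => Real.log (m:ℝ)) (m + 1) - (fun m : ℕ => Real.log (m:ℝ)) m := by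
      intro m hm
      obtain ⟨hm1, _⟩ := Finset.mem_Ico.mp hm
      have hm0 : (0:ℝ) < (m:ℝ) := by exact_mod_cast hm1
      have hx : (0:ℝ) < (m:ℝ) / ((m:ℝ) + 1) := by positivity
      have hlog := Real.log_le_sub_one_of_pos hx
      have hld : Real.log ((m:ℝ) / ((m:ℝ) + 1)) =
          Real.log (m:ℝ) - Real.log ((m:ℝ) + 1) :=
        Real.log_div hm0.ne' (by linarith)
      have hval : (m:ℝ) / ((m:ℝ) + 1) - 1 = -(1 / ((m:ℝ) + 1)) := by
        field_simp
        ring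
      rw [hld, hval] at hlog
      have : Real.log ((m + 1 : ℕ) : ℝ) = Real.log ((m:ℝ) + 1) := by push_cast; rfl
      simp only [this]
      linarith
    calc ∑ m ∈ Finset.Ico 1 R, (1:ℝ) / ((m:ℝ) + 1)
        ≤ ∑ m ∈ Finset.Ico 1 R,
            ((fun m : ℕ => Real.log (m:ℝ)) (m + 1) - (fun m : ℕ => Real.log (m:ℝ)) m) :=
          Finset.sum_le_sum h1
      _ = Real.log (R:ℝ) - Real.log ((1:ℕ):ℝ) := by
          exact tele_sum (fun m : ℕ => Real.log (m:ℝ)) 1 R (by omega)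
      _ = Real.log (R:ℝ) := by norm_num
  -- put everything together
  have hdsum : ∑ m ∈ Finset.Ico 1 R, ((F.filter fun I => Ideal.absNorm I ≤ m).card : ℝ) *
      ((1:ℝ) / (m:ℝ) - 1 / ((m:ℝ) + 1)) ≤ C₂ * Real.log R := by
    calc _ ≤ ∑ m ∈ Finset.Ico 1 R, C₂ * (1 / ((m:ℝ) + 1)) := Finset.sum_le_sum hbound
      _ = C₂ * ∑ m ∈ Finset.Ico 1 R, (1:ℝ) / ((m:ℝ) + 1) := by
          rw [Finset.mul_sum]
      _ ≤ C₂ * Real.log R := mul_le_mul_of_nonneg_left hharm (by linarith)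
  have h2log : (1:ℝ) ≤ 2 * Real.log R := by nlinarith
  nlinarith [hpart1, hdsum]
end

section
/- Let K be an algebraic number field and C > 0. There exists a constant d′ = d′(C,K) > 0 such that for all X ≥ 2, Σ_{𝔞 ⊆ O_K, 0 < |𝔞| ≤ X} τ(𝔞)^C/|𝔞| ≪_{C,K} (log X)^{d′}, where the sum is over non-zero integral ideals 𝔞 of O_K of absolute norm at most X and τ(𝔞) is the number of integral ideals dividing 𝔞. -/
open NumberField Filter Topology

noncomputable section

/-- The divisor function on ideals: the number of integral ideals dividing `𝔞`. -/
def tauIdeal (K : Type) [Field K] [NumberField K] (𝔞 : Ideal (𝓞 K)) : ℕ :=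
  Nat.card {I : Ideal (𝓞 K) // I ∣ 𝔞}

namespace NatTau

open Finset

lemma card_divisors_mul_le (a b : ℕ) (ha : a ≠ 0) (hb : b ≠ 0) :
    (a * b).divisors.card ≤ a.divisors.card * b.divisors.card := by
  have hsub : (a * b).divisors ⊆ (a.divisors ×ˢ b.divisors).image (fun p => p.1 * p.2) := by
    intro d hd
    rw [Nat.mem_divisors] at hd
    obtain ⟨a', b', ha', hb', rfl⟩ := exists_dvd_and_dvd_of_dvd_mul hd.1
    exact Finset.mem_image.mpr ⟨(a', b'), Finset.mem_product.mpr
      ⟨Nat.mem_divisors.mpr ⟨ha', ha⟩, Nat.mem_divisors.mpr ⟨hb', hb⟩⟩, rfl⟩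
  calc (a * b).divisors.card ≤ ((a.divisors ×ˢ b.divisors).image (fun p => p.1 * p.2)).card :=
        Finset.card_le_card hsub
    _ ≤ (a.divisors ×ˢ b.divisors).card := Finset.card_image_le
    _ = a.divisors.card * b.divisors.card := Finset.card_product _ _

lemma card_divisorsAntidiagonal (n : ℕ) :
    n.divisorsAntidiagonal.card = n.divisors.card := by
  rw [← Nat.image_fst_divisorsAntidiagonal]
  refine (Finset.card_image_of_injOn ?_).symm
  rintro ⟨a, b⟩ ha ⟨a', b'⟩ hb (h : a = a')
  rw [Finset.mem_coe, Nat.mem_divisorsAntidiagonal] at ha hb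
  subst h
  have hane : a ≠ 0 := by rintro rfl; rw [zero_mul] at ha; exact ha.2 ha.1.symm
  have hbb : b = b' :=
    Nat.eq_of_mul_eq_mul_left (Nat.pos_of_ne_zero hane) (ha.1.trans hb.1.symm)
  rw [hbb]

lemma sum_inv_le {X : ℝ} (hX : 2 ≤ X) :
    ∑ n ∈ Finset.Icc 1 ⌊X⌋₊, (1 : ℝ) / n ≤ 3 * Real.log X := by
  have h1X : (1 : ℝ) ≤ X := by linarith
  have hharm : ∑ n ∈ Finset.Icc 1 ⌊X⌋₊, (1 : ℝ) / n = ((harmonic ⌊X⌋₊ : ℚ) : ℝ) := by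
    rw [harmonic]
    push_cast
    rw [← Finset.Ico_add_one_right_eq_Icc, Finset.sum_Ico_eq_sum_range]
    simp [one_div, add_comm]
  have hlog2 : (1 : ℝ) / 2 ≤ Real.log X := by
    have := Real.log_le_log (by norm_num : (0:ℝ) < 2) hX
    have h2 : (0.6931471803 : ℝ) < Real.log 2 := Real.log_two_gt_d9
    linarith
  have hle := harmonic_floor_le_one_add_log X h1X
  rw [hharm]
  calc ((harmonic ⌊X⌋₊ : ℚ) : ℝ) ≤ 1 + Real.log X := hle
    _ ≤ 3 * Real.log X := by linarith

lemma key_step (J : ℕ) (N : ℕ) :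
    ∑ n ∈ Finset.Icc 1 N, ((n.divisors.card : ℝ) ^ (J + 1) / n)
      ≤ (∑ m ∈ Finset.Icc 1 N, ((m.divisors.card : ℝ) ^ J / m)) ^ 2 := by
  have hterm : ∀ n ∈ Finset.Icc 1 N, ((n.divisors.card : ℝ) ^ (J + 1) / n)
      ≤ ∑ p ∈ n.divisorsAntidiagonal,
          ((p.1.divisors.card : ℝ) ^ J / p.1) * ((p.2.divisors.card : ℝ) ^ J / p.2) := by
    intro n hn
    rw [Finset.mem_Icc] at hn
    have hn0 : n ≠ 0 := by omega
    have h1 : ((n.divisors.card : ℝ) ^ (J + 1) / n)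
        = ∑ _p ∈ n.divisorsAntidiagonal, ((n.divisors.card : ℝ) ^ J / n) := by
      rw [Finset.sum_const, card_divisorsAntidiagonal, nsmul_eq_mul, pow_succ]
      ring
    rw [h1]
    refine Finset.sum_le_sum ?_
    rintro ⟨a, b⟩ hp
    rw [Nat.mem_divisorsAntidiagonal] at hp
    have hab : a * b = n := hp.1
    have ha0 : a ≠ 0 := by rintro rfl; rw [zero_mul] at hab; exact hn0 hab.symm
    have hb0 : b ≠ 0 := by rintro rfl; rw [mul_zero] at hab; exact hn0 hab.symm
    have hτ : (n.divisors.card : ℝ) ≤ (a.divisors.card : ℝ) * (b.divisors.card : ℝ) := by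
      rw [← hab]
      exact_mod_cast card_divisors_mul_le a b ha0 hb0
    have hτ0 : (0:ℝ) ≤ (n.divisors.card : ℝ) := by positivity
    have hnn : (n : ℝ) = (a : ℝ) * (b : ℝ) := by exact_mod_cast hab.symm
    have hrhs : ((a.divisors.card : ℝ) ^ J / a) * ((b.divisors.card : ℝ) ^ J / b)
        = ((a.divisors.card : ℝ) * (b.divisors.card : ℝ)) ^ J / ((a : ℝ) * (b : ℝ)) := by
      rw [div_mul_div_comm, mul_pow]
    rw [hrhs, ← hnn]
    have hnpos : (0:ℝ) < (n : ℝ) := by exact_mod_cast Nat.pos_of_ne_zero hn0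
    exact div_le_div_of_nonneg_right (pow_le_pow_left₀ hτ0 hτ J) hnpos.le
  have hdisj : (↑(Finset.Icc 1 N) : Set ℕ).PairwiseDisjoint Nat.divisorsAntidiagonal := by
    intro m _ n _ hmn
    simp only [Function.onFun]
    rw [Finset.disjoint_left]
    intro p hpm hpn
    rw [Nat.mem_divisorsAntidiagonal] at hpm hpn
    exact hmn (hpm.1.symm.trans hpn.1)
  have hsub : (Finset.Icc 1 N).biUnion Nat.divisorsAntidiagonal
      ⊆ Finset.Icc 1 N ×ˢ Finset.Icc 1 N := by
    intro p hp
    rw [Finset.mem_biUnion] at hp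
    obtain ⟨n, hn, hpn⟩ := hp
    rw [Finset.mem_Icc] at hn
    rw [Nat.mem_divisorsAntidiagonal] at hpn
    have h1 : p.1 ∣ n := ⟨p.2, hpn.1.symm⟩
    have h2 : p.2 ∣ n := ⟨p.1, by rw [mul_comm]; exact hpn.1.symm⟩
    have hn0 : 0 < n := by omega
    rw [Finset.mem_product, Finset.mem_Icc, Finset.mem_Icc]
    refine ⟨⟨?_, (Nat.le_of_dvd hn0 h1).trans hn.2⟩, ?_, (Nat.le_of_dvd hn0 h2).trans hn.2⟩
    · exact Nat.pos_of_ne_zero fun h => by rw [h, zero_mul] at hpn; omega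
    · exact Nat.pos_of_ne_zero fun h => by rw [h, mul_zero] at hpn; omega
  calc ∑ n ∈ Finset.Icc 1 N, ((n.divisors.card : ℝ) ^ (J + 1) / n)
      ≤ ∑ n ∈ Finset.Icc 1 N, ∑ p ∈ n.divisorsAntidiagonal,
          ((p.1.divisors.card : ℝ) ^ J / p.1) * ((p.2.divisors.card : ℝ) ^ J / p.2) :=
        Finset.sum_le_sum hterm
    _ = ∑ p ∈ (Finset.Icc 1 N).biUnion Nat.divisorsAntidiagonal,
          ((p.1.divisors.card : ℝ) ^ J / p.1) * ((p.2.divisors.card : ℝ) ^ J / p.2) :=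
        (Finset.sum_biUnion hdisj).symm
    _ ≤ ∑ p ∈ Finset.Icc 1 N ×ˢ Finset.Icc 1 N,
          ((p.1.divisors.card : ℝ) ^ J / p.1) * ((p.2.divisors.card : ℝ) ^ J / p.2) :=
        Finset.sum_le_sum_of_subset_of_nonneg hsub (fun p _ _ => by positivity)
    _ = (∑ m ∈ Finset.Icc 1 N, ((m.divisors.card : ℝ) ^ J / m)) ^ 2 := by
        rw [Finset.sum_product, sq, Finset.sum_mul_sum]

lemma nat_sum_tau_pow (J : ℕ) : ∃ c : ℝ, 0 < c ∧ ∀ X : ℝ, 2 ≤ X →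
    ∑ n ∈ Finset.Icc 1 ⌊X⌋₊, ((n.divisors.card : ℝ) ^ J / n)
      ≤ c * Real.log X ^ (2 ^ J) := by
  induction J with
  | zero =>
    refine ⟨3, by norm_num, fun X hX => ?_⟩
    simpa using sum_inv_le hX
  | succ J ih =>
    obtain ⟨c, hc, h⟩ := ih
    refine ⟨c ^ 2, by positivity, fun X hX => ?_⟩
    have hlog : (0:ℝ) ≤ Real.log X := Real.log_nonneg (by linarith)
    have hsum0 : (0:ℝ) ≤ ∑ m ∈ Finset.Icc 1 ⌊X⌋₊, ((m.divisors.card : ℝ) ^ J / m) := by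
      refine Finset.sum_nonneg fun m _ => by positivity
    calc ∑ n ∈ Finset.Icc 1 ⌊X⌋₊, ((n.divisors.card : ℝ) ^ (J + 1) / n)
        ≤ (∑ m ∈ Finset.Icc 1 ⌊X⌋₊, ((m.divisors.card : ℝ) ^ J / m)) ^ 2 := key_step J _
      _ ≤ (c * Real.log X ^ (2 ^ J)) ^ 2 := pow_le_pow_left₀ hsum0 (h X hX) 2
      _ = c ^ 2 * Real.log X ^ (2 ^ (J + 1)) := by
          rw [mul_pow, ← pow_mul, ← pow_succ]

end NatTau

namespace TauAux

open Ideal UniqueFactorizationMonoid NatTau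

variable {K : Type} [Field K] [NumberField K]

lemma finite_divisors {𝔟 : Ideal (𝓞 K)} (h : 𝔟 ≠ 0) :
    Finite {I : Ideal (𝓞 K) // I ∣ 𝔟} := by
  have hN : absNorm 𝔟 ≠ 0 := by
    rwa [Ne, absNorm_eq_zero_iff, ← Ideal.zero_eq_bot]
  have : {I : Ideal (𝓞 K) | I ∣ 𝔟}.Finite := by
    refine (Ideal.finite_setOf_absNorm_le (absNorm 𝔟)).subset ?_
    intro I hI
    exact Nat.le_of_dvd (Nat.pos_of_ne_zero hN) (map_dvd absNorm hI)
  exact this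

lemma one_le_tau (𝔞 : Ideal (𝓞 K)) (h : 𝔞 ≠ 0) : 1 ≤ tauIdeal K 𝔞 := by
  have : Finite {I : Ideal (𝓞 K) // I ∣ 𝔞} := finite_divisors h
  have : Nonempty {I : Ideal (𝓞 K) // I ∣ 𝔞} := ⟨⟨𝔞, dvd_rfl⟩⟩
  exact Nat.card_pos

lemma tau_le_of_dvd {𝔞 𝔟 : Ideal (𝓞 K)} (h : 𝔞 ∣ 𝔟) (h𝔟 : 𝔟 ≠ 0) :
    tauIdeal K 𝔞 ≤ tauIdeal K 𝔟 := by
  have : Finite {I : Ideal (𝓞 K) // I ∣ 𝔟} := finite_divisors h𝔟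
  exact Nat.card_le_card_of_injective
    (fun d => ⟨d.1, d.2.trans h⟩)
    (fun x y hxy => by simpa [Subtype.ext_iff] using hxy)

lemma tau_mul_le (𝔞 𝔟 : Ideal (𝓞 K)) (h𝔞 : 𝔞 ≠ 0) (h𝔟 : 𝔟 ≠ 0) :
    tauIdeal K (𝔞 * 𝔟) ≤ tauIdeal K 𝔞 * tauIdeal K 𝔟 := by
  have h1 : Finite {I : Ideal (𝓞 K) // I ∣ 𝔞} := finite_divisors h𝔞
  have h2 : Finite {I : Ideal (𝓞 K) // I ∣ 𝔟} := finite_divisors h𝔟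
  have key : Function.Surjective
      (fun p : {I : Ideal (𝓞 K) // I ∣ 𝔞} × {I : Ideal (𝓞 K) // I ∣ 𝔟} =>
        (⟨p.1.1 * p.2.1, mul_dvd_mul p.1.2 p.2.2⟩ : {I : Ideal (𝓞 K) // I ∣ 𝔞 * 𝔟})) := by
    rintro ⟨I, hI⟩
    obtain ⟨a, b, ha, hb, rfl⟩ := exists_dvd_and_dvd_of_dvd_mul hI
    exact ⟨⟨⟨a, ha⟩, ⟨b, hb⟩⟩, rfl⟩
  calc tauIdeal K (𝔞 * 𝔟) ≤ Nat.card ({I : Ideal (𝓞 K) // I ∣ 𝔞} × {I : Ideal (𝓞 K) // I ∣ 𝔟}) :=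
        Nat.card_le_card_of_surjective _ key
    _ = tauIdeal K 𝔞 * tauIdeal K 𝔟 := Nat.card_prod _ _

lemma tau_prime_pow_le {𝔭 : Ideal (𝓞 K)} (hp : Prime 𝔭) (a : ℕ) :
    tauIdeal K (𝔭 ^ a) ≤ a + 1 := by
  have key : Function.Surjective
      (fun j : Fin (a + 1) => (⟨𝔭 ^ (j : ℕ), pow_dvd_pow 𝔭 (Nat.lt_succ_iff.mp j.2)⟩ :
        {I : Ideal (𝓞 K) // I ∣ 𝔭 ^ a})) := by
    rintro ⟨I, hI⟩
    obtain ⟨i, hi, hassoc⟩ := (dvd_prime_pow hp a).mp hI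
    exact ⟨⟨i, Nat.lt_succ_of_le hi⟩, by simp [← associated_iff_eq.mp hassoc]⟩
  calc tauIdeal K (𝔭 ^ a) ≤ Nat.card (Fin (a + 1)) := Nat.card_le_card_of_surjective _ key
    _ = a + 1 := by simp

lemma tau_one_le : tauIdeal K 1 ≤ 1 := by
  have key : Function.Surjective (fun _ : Unit => (⟨1, dvd_rfl⟩ : {I : Ideal (𝓞 K) // I ∣ 1})) := by
    rintro ⟨I, hI⟩
    have : I = 1 := by
      have := isUnit_of_dvd_one hI
      rwa [Ideal.isUnit_iff, ← Ideal.one_eq_top] at this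
    exact ⟨⟨⟩, by simp [this]⟩
  calc tauIdeal K 1 ≤ Nat.card Unit := Nat.card_le_card_of_surjective _ key
    _ = 1 := Nat.card_eq_one_iff_unique.mpr ⟨inferInstance, inferInstance⟩

lemma tau_pow_le_of_card (a : ℕ) : ∀ m : ℕ, ∀ 𝔟 : Ideal (𝓞 K), 𝔟 ≠ 0 →
    Multiset.card (normalizedFactors 𝔟) = m → tauIdeal K (𝔟 ^ a) ≤ (a + 1) ^ m := by
  intro m
  induction m with
  | zero =>
    intro 𝔟 h hm
    have h1 : 𝔟 = 1 := by
      have h2 := prod_normalizedFactors h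
      rw [Multiset.card_eq_zero.mp hm, Multiset.prod_zero] at h2
      exact (associated_iff_eq.mp h2).symm
    rw [h1, one_pow, pow_zero]
    exact tau_one_le
  | succ m ih =>
    intro 𝔟 h hm
    have hne : normalizedFactors 𝔟 ≠ 0 := by
      intro h0; rw [h0] at hm; simp at hm
    obtain ⟨𝔭, hmem⟩ := Multiset.exists_mem_of_ne_zero hne
    have hprime : Prime 𝔭 := prime_of_normalized_factor _ hmem
    obtain ⟨𝔠, rfl⟩ := dvd_of_mem_normalizedFactors hmem
    have h𝔭 : 𝔭 ≠ 0 := hprime.ne_zero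
    have h𝔠 : 𝔠 ≠ 0 := fun h0 => h (by simp [h0])
    have hcard : Multiset.card (normalizedFactors 𝔠) = m := by
      rw [normalizedFactors_mul h𝔭 h𝔠, normalizedFactors_irreducible hprime.irreducible,
        normalize_eq] at hm
      simpa using hm
    calc tauIdeal K ((𝔭 * 𝔠) ^ a) = tauIdeal K (𝔭 ^ a * 𝔠 ^ a) := by rw [mul_pow]
      _ ≤ tauIdeal K (𝔭 ^ a) * tauIdeal K (𝔠 ^ a) :=
          tau_mul_le _ _ (pow_ne_zero _ h𝔭) (pow_ne_zero _ h𝔠)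
      _ ≤ (a + 1) * (a + 1) ^ m :=
          Nat.mul_le_mul (tau_prime_pow_le hprime a) (ih _ h𝔠 hcard)
      _ = (a + 1) ^ (m + 1) := (pow_succ' _ _).symm

lemma absNorm_span_natCast (n : ℕ) :
    absNorm (span {(n : 𝓞 K)} : Ideal (𝓞 K)) = n ^ Module.finrank ℚ K := by
  rw [absNorm_span_singleton]
  have : ((n : 𝓞 K)) = algebraMap ℤ (𝓞 K) (n : ℤ) := by simp
  rw [this, Algebra.norm_algebraMap_of_basis (RingOfIntegers.basis K),
    ← Module.finrank_eq_card_chooseBasisIndex, RingOfIntegers.rank]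
  simp [Int.natAbs_pow]

lemma card_normalizedFactors_span_prime_le {p : ℕ} (hp : p.Prime) :
    Multiset.card (normalizedFactors (span {(p : 𝓞 K)} : Ideal (𝓞 K))) ≤ Module.finrank ℚ K := by
  set 𝔟 : Ideal (𝓞 K) := span {(p : 𝓞 K)} with h𝔟def
  have h𝔟 : 𝔟 ≠ 0 := by
    rw [h𝔟def, Ne, Ideal.zero_eq_bot, span_singleton_eq_bot]
    exact_mod_cast hp.ne_zero
  have hN : absNorm 𝔟 = p ^ Module.finrank ℚ K := absNorm_span_natCast p
  have hfac : (normalizedFactors 𝔟).prod = 𝔟 :=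
    associated_iff_eq.mp (prod_normalizedFactors h𝔟)
  have hkey : p ^ Multiset.card (normalizedFactors 𝔟) ≤ p ^ Module.finrank ℚ K := by
    have h1 : p ^ Multiset.card (normalizedFactors 𝔟)
        ≤ (Multiset.map absNorm (normalizedFactors 𝔟)).prod := by
      have := Multiset.pow_card_le_prod (s := Multiset.map absNorm (normalizedFactors 𝔟))
        (a := p) ?_
      · simpa using this
      · rintro x hx
        obtain ⟨𝔮, h𝔮, rfl⟩ := Multiset.mem_map.mp hx
        have hq : Prime 𝔮 := prime_of_normalized_factor _ h𝔮
        have hdvd : absNorm 𝔮 ∣ p ^ Module.finrank ℚ K := by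
          rw [← hN]
          exact map_dvd absNorm (dvd_of_mem_normalizedFactors h𝔮)
        obtain ⟨j, hj, hEq⟩ := (Nat.dvd_prime_pow hp).mp hdvd
        have hj0 : j ≠ 0 := by
          rintro rfl
          rw [pow_zero] at hEq
          exact hq.not_unit (Ideal.isUnit_iff.mpr (absNorm_eq_one_iff.mp hEq))
        rw [hEq]
        calc p = p ^ 1 := (pow_one p).symm
          _ ≤ p ^ j := Nat.pow_le_pow_right hp.pos (Nat.one_le_iff_ne_zero.mpr hj0)
    rwa [← map_multiset_prod, hfac, hN] at h1
  exact (Nat.pow_le_pow_iff_right hp.one_lt).mp hkey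

lemma span_natCast_ne_zero {n : ℕ} (hn : n ≠ 0) :
    (span {(n : 𝓞 K)} : Ideal (𝓞 K)) ≠ 0 := by
  rw [Ne, Ideal.zero_eq_bot, span_singleton_eq_bot]
  exact_mod_cast hn

lemma tau_span_prime_pow_le {p : ℕ} (hp : p.Prime) (k : ℕ) :
    tauIdeal K (span {((p ^ k : ℕ) : 𝓞 K)}) ≤ (k + 1) ^ Module.finrank ℚ K := by
  have h1 : (span {((p ^ k : ℕ) : 𝓞 K)} : Ideal (𝓞 K)) = span {(p : 𝓞 K)} ^ k := by
    rw [Ideal.span_singleton_pow]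
    push_cast
    rfl
  rw [h1]
  calc tauIdeal K (span {(p : 𝓞 K)} ^ k)
      ≤ (k + 1) ^ Multiset.card (normalizedFactors (span {(p : 𝓞 K)} : Ideal (𝓞 K))) :=
        tau_pow_le_of_card k _ _ (span_natCast_ne_zero hp.ne_zero) rfl
    _ ≤ (k + 1) ^ Module.finrank ℚ K :=
        Nat.pow_le_pow_right (Nat.succ_pos k) (card_normalizedFactors_span_prime_le hp)

lemma tau_span_le : ∀ n : ℕ, n ≠ 0 →
    tauIdeal K (span {(n : 𝓞 K)}) ≤ n.divisors.card ^ Module.finrank ℚ K := by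
  refine Nat.recOnPrimePow (by simp) ?_ ?_
  · intro _
    have : (span {((1 : ℕ) : 𝓞 K)} : Ideal (𝓞 K)) = 1 := by
      simp [Ideal.one_eq_top]
    rw [this]
    calc tauIdeal K 1 ≤ 1 := tau_one_le
      _ ≤ (Nat.divisors 1).card ^ Module.finrank ℚ K := by simp
  · intro a p k hp hpa hk ih _
    have ha : a ≠ 0 := by
      rintro rfl
      exact hpa (dvd_zero p)
    have hsplit : (span {((p ^ k * a : ℕ) : 𝓞 K)} : Ideal (𝓞 K)) =
        span {((p ^ k : ℕ) : 𝓞 K)} * span {((a : ℕ) : 𝓞 K)} := by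
      rw [Ideal.span_singleton_mul_span_singleton]
      push_cast
      rfl
    have hcop : (p ^ k).Coprime a := (hp.coprime_iff_not_dvd.mpr hpa).pow_left _
    have hcard : (p ^ k * a).divisors.card = (k + 1) * a.divisors.card := by
      rw [hcop.card_divisors_mul]
      congr 1
      rw [Nat.divisors_prime_pow hp]
      simp
    rw [hsplit, hcard]
    calc tauIdeal K (span {((p ^ k : ℕ) : 𝓞 K)} * span {((a : ℕ) : 𝓞 K)})
        ≤ tauIdeal K (span {((p ^ k : ℕ) : 𝓞 K)}) * tauIdeal K (span {((a : ℕ) : 𝓞 K)}) :=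
          tau_mul_le _ _ (span_natCast_ne_zero (pow_ne_zero _ hp.ne_zero))
            (span_natCast_ne_zero ha)
      _ ≤ (k + 1) ^ Module.finrank ℚ K * a.divisors.card ^ Module.finrank ℚ K :=
          Nat.mul_le_mul (tau_span_prime_pow_le hp k) (ih ha)
      _ = ((k + 1) * a.divisors.card) ^ Module.finrank ℚ K := (mul_pow _ _ _).symm

lemma tau_le_divisors_pow {𝔞 : Ideal (𝓞 K)} (h : 𝔞 ≠ 0) :
    tauIdeal K 𝔞 ≤ (absNorm 𝔞).divisors.card ^ Module.finrank ℚ K := by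
  have hN : absNorm 𝔞 ≠ 0 := by
    rwa [Ne, absNorm_eq_zero_iff, ← Ideal.zero_eq_bot]
  have hdvd : 𝔞 ∣ span {((absNorm 𝔞 : ℕ) : 𝓞 K)} := by
    rw [Ideal.dvd_iff_le, span_singleton_le_iff_mem]
    exact absNorm_mem 𝔞
  calc tauIdeal K 𝔞 ≤ tauIdeal K (span {((absNorm 𝔞 : ℕ) : 𝓞 K)}) :=
        tau_le_of_dvd hdvd (span_natCast_ne_zero hN)
    _ ≤ (absNorm 𝔞).divisors.card ^ Module.finrank ℚ K := tau_span_le _ hN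

lemma fiber_card_le_tau_span {n : ℕ} (hn : n ≠ 0) (s : Finset (Ideal (𝓞 K)))
    (hs : ∀ 𝔞 ∈ s, absNorm 𝔞 = n) :
    s.card ≤ tauIdeal K (span {(n : 𝓞 K)}) := by
  have hfin : Finite {I : Ideal (𝓞 K) // I ∣ span {(n : 𝓞 K)}} :=
    finite_divisors (span_natCast_ne_zero hn)
  have hinj : Function.Injective
      (fun 𝔞 : {x // x ∈ s} => (⟨𝔞.1, by
        rw [Ideal.dvd_iff_le, span_singleton_le_iff_mem, ← hs 𝔞.1 𝔞.2]
        exact absNorm_mem 𝔞.1⟩ : {I : Ideal (𝓞 K) // I ∣ span {(n : 𝓞 K)}})) := by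
    rintro ⟨x, hx⟩ ⟨y, hy⟩ hxy
    simpa [Subtype.ext_iff] using hxy
  calc s.card = Nat.card {x // x ∈ s} := (Nat.card_eq_finsetCard s).symm
    _ ≤ tauIdeal K (span {(n : 𝓞 K)}) := Nat.card_le_card_of_injective _ hinj

end TauAux

section Main

open TauAux NatTau Ideal

/-- A divisor-power sum estimate: `∑_{0 < |𝔞| ≤ X} τ(𝔞)^C / |𝔞| ≪_{C,K} (log X)^{d'}`. -/
theorem sum_tau_pow_div_norm_le
    (K : Type) [Field K] [NumberField K] (C : ℝ) (hC : 0 < C) :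
    ∃ d' > 0, ∃ c > 0, ∀ X : ℝ, 2 ≤ X →
      (∑ᶠ 𝔞 ∈ {𝔞 : Ideal (𝓞 K) | 0 < Ideal.absNorm 𝔞 ∧ (Ideal.absNorm 𝔞 : ℝ) ≤ X},
        (tauIdeal K 𝔞 : ℝ) ^ C / (Ideal.absNorm 𝔞 : ℝ)) ≤ c * Real.log X ^ d' := by
  classical
  set d : ℕ := Module.finrank ℚ K with hd
  set k : ℕ := max 1 ⌈C⌉₊ with hk
  set J : ℕ := d * k + d with hJ
  obtain ⟨c, hc, hbound⟩ := nat_sum_tau_pow J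
  refine ⟨2 ^ J, Nat.two_pow_pos J, c, hc, fun X hX => ?_⟩
  set S : Set (Ideal (𝓞 K)) :=
    {𝔞 : Ideal (𝓞 K) | 0 < Ideal.absNorm 𝔞 ∧ (Ideal.absNorm 𝔞 : ℝ) ≤ X} with hS
  have hSfin : S.Finite := by
    refine (Ideal.finite_setOf_absNorm_le (S := 𝓞 K) ⌊X⌋₊).subset ?_
    intro 𝔞 h𝔞
    exact Nat.le_floor h𝔞.2
  rw [finsum_mem_eq_finite_toFinset_sum _ hSfin]
  set T : Finset (Ideal (𝓞 K)) := hSfin.toFinset with hT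
  have hmemT : ∀ 𝔞 ∈ T, 0 < absNorm 𝔞 ∧ (absNorm 𝔞 : ℝ) ≤ X := by
    intro 𝔞 h𝔞
    rwa [hT, Set.Finite.mem_toFinset] at h𝔞
  have hne : ∀ 𝔞 ∈ T, 𝔞 ≠ 0 := by
    intro 𝔞 h𝔞 h0
    have := (hmemT 𝔞 h𝔞).1
    rw [h0] at this
    simp [Ideal.zero_eq_bot, absNorm_bot] at this
  -- termwise bound
  have hterm : ∀ 𝔞 ∈ T, (tauIdeal K 𝔞 : ℝ) ^ C / (absNorm 𝔞 : ℝ)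
      ≤ ((absNorm 𝔞).divisors.card : ℝ) ^ (d * k) / (absNorm 𝔞 : ℝ) := by
    intro 𝔞 h𝔞
    have h𝔞0 : 𝔞 ≠ 0 := hne 𝔞 h𝔞
    have hτ1 : (1 : ℝ) ≤ (tauIdeal K 𝔞 : ℝ) := by exact_mod_cast one_le_tau 𝔞 h𝔞0
    have hNpos : (0 : ℝ) < (absNorm 𝔞 : ℝ) := by exact_mod_cast (hmemT 𝔞 h𝔞).1
    refine div_le_div_of_nonneg_right ?_ hNpos.le
    have hCk : C ≤ (k : ℝ) := by
      refine (Nat.le_ceil C).trans ?_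
      exact_mod_cast Nat.le_max_right 1 ⌈C⌉₊
    calc (tauIdeal K 𝔞 : ℝ) ^ C ≤ (tauIdeal K 𝔞 : ℝ) ^ (k : ℝ) :=
          Real.rpow_le_rpow_of_exponent_le hτ1 hCk
      _ = (tauIdeal K 𝔞 : ℝ) ^ (k : ℕ) := Real.rpow_natCast _ k
      _ ≤ (((absNorm 𝔞).divisors.card : ℝ) ^ d) ^ k := by
          have := tau_le_divisors_pow h𝔞0
          have h1 : (tauIdeal K 𝔞 : ℝ) ≤ ((absNorm 𝔞).divisors.card : ℝ) ^ d := by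
            exact_mod_cast this
          exact pow_le_pow_left₀ (by positivity) h1 k
      _ = ((absNorm 𝔞).divisors.card : ℝ) ^ (d * k) := by rw [← pow_mul]
  have hmaps : ∀ 𝔞 ∈ T, absNorm 𝔞 ∈ Finset.Icc 1 ⌊X⌋₊ := by
    intro 𝔞 h𝔞
    rw [Finset.mem_Icc]
    exact ⟨(hmemT 𝔞 h𝔞).1, Nat.le_floor (hmemT 𝔞 h𝔞).2⟩
  calc ∑ 𝔞 ∈ T, (tauIdeal K 𝔞 : ℝ) ^ C / (absNorm 𝔞 : ℝ)
      ≤ ∑ 𝔞 ∈ T, ((absNorm 𝔞).divisors.card : ℝ) ^ (d * k) / (absNorm 𝔞 : ℝ) :=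
        Finset.sum_le_sum hterm
    _ = ∑ n ∈ Finset.Icc 1 ⌊X⌋₊, ∑ 𝔞 ∈ T.filter (fun 𝔞 => absNorm 𝔞 = n),
          ((absNorm 𝔞).divisors.card : ℝ) ^ (d * k) / (absNorm 𝔞 : ℝ) :=
        (Finset.sum_fiberwise_of_maps_to hmaps _).symm
    _ ≤ ∑ n ∈ Finset.Icc 1 ⌊X⌋₊, ((n.divisors.card : ℝ) ^ J / n) := by
        refine Finset.sum_le_sum ?_
        intro n hn
        rw [Finset.mem_Icc] at hn
        have hn0 : n ≠ 0 := by omega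
        have hinner : ∑ 𝔞 ∈ T.filter (fun 𝔞 => absNorm 𝔞 = n),
            ((absNorm 𝔞).divisors.card : ℝ) ^ (d * k) / (absNorm 𝔞 : ℝ)
            = (T.filter (fun 𝔞 => absNorm 𝔞 = n)).card *
                ((n.divisors.card : ℝ) ^ (d * k) / n) := by
          rw [Finset.sum_congr rfl (fun 𝔞 h𝔞 => ?_), Finset.sum_const, nsmul_eq_mul]
          rw [Finset.mem_filter] at h𝔞
          rw [h𝔞.2]
        rw [hinner]
        have hcard : ((T.filter (fun 𝔞 => absNorm 𝔞 = n)).card : ℝ)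
            ≤ ((n.divisors.card : ℝ) ^ d) := by
          have h1 := fiber_card_le_tau_span (K := K) hn0 (T.filter (fun 𝔞 => absNorm 𝔞 = n))
            (fun 𝔞 h𝔞 => (Finset.mem_filter.mp h𝔞).2)
          have h2 : tauIdeal K (span {(n : 𝓞 K)}) ≤ n.divisors.card ^ d :=
            tau_span_le n hn0
          exact_mod_cast h1.trans h2
        calc (T.filter (fun 𝔞 => absNorm 𝔞 = n)).card *
              ((n.divisors.card : ℝ) ^ (d * k) / n)
            ≤ ((n.divisors.card : ℝ) ^ d) * ((n.divisors.card : ℝ) ^ (d * k) / n) := by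
              refine mul_le_mul_of_nonneg_right hcard (by positivity)
          _ = (n.divisors.card : ℝ) ^ J / n := by
              rw [hJ, pow_add]
              ring
    _ ≤ c * Real.log X ^ (2 ^ J) := hbound X hX

end Main

end
end
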